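/- The points G₁ = (2880000, 18655065600) and G₂ = (37002889/36, 1971840224123/216) are rational points on the elliptic curve y² = x³ + 17558832x² + 61973480694272x, and both G₁ and G₂ have infinite order in the group of rational points of this curve. -/

import Mathlib

/-- The elliptic curve `y² = x³ + 17558832x² + 61973480694272x` over `ℚ`. -/
noncomputable def specializedCurveW6 : WeierstrassCurve.Affine ℚ :=
  { a₁ := 0, a₂ := 17558832, a₃ := 0, a₄ := 61973480694272, a₆ := 0 }

open WeierstrassCurve.Affine WeierstrassCurve.Affine.Point

private lemma v2_int (a : ℤ) (ha : ¬ (2:ℤ) ∣ a) : padicValRat 2 (a : ℚ) = 0 := by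
  rw [padicValRat.of_int, padicValInt.eq_zero_of_not_dvd ha]; rfl

private lemma v2_aux (a : ℤ) (s : ℕ) (ha : ¬ (2:ℤ) ∣ a) :
    padicValRat 2 ((a : ℚ) * 2 ^ s) = s := by
  have ha0 : (a:ℚ) ≠ 0 := by
    simp only [ne_eq, Int.cast_eq_zero]; rintro rfl; exact ha ⟨0, by ring⟩
  rw [padicValRat.mul ha0 (by positivity), v2_int a ha,
    show ((2:ℚ)) = ((2:ℕ):ℚ) by norm_num,
    padicValRat.pow, padicValRat.self (by norm_num)]
  ring

private lemma v2_two : padicValRat 2 (2:ℚ) = 1 := by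
  rw [show ((2:ℚ)) = ((2:ℕ):ℚ) by norm_num, padicValRat.self (by norm_num)]

private lemma v2_div (a b : ℤ) (s t : ℕ) (ha : ¬ (2:ℤ) ∣ a) (hb : ¬ (2:ℤ) ∣ b) :
    padicValRat 2 ((a : ℚ) * 2 ^ s / ((b:ℚ) * 2 ^ t)) = (s : ℤ) - t := by
  have ha0 : (a:ℚ) ≠ 0 := by
    simp only [ne_eq, Int.cast_eq_zero]; rintro rfl; exact ha ⟨0, by ring⟩
  have hb0 : (b:ℚ) ≠ 0 := by
    simp only [ne_eq, Int.cast_eq_zero]; rintro rfl; exact hb ⟨0, by ring⟩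
  rw [padicValRat.div (by positivity) (by positivity), v2_aux a s ha, v2_aux b t hb]

private lemma add_ne_zero_of_v2_ne {q r : ℚ} (hq : q ≠ 0)
    (h : padicValRat 2 q ≠ padicValRat 2 r) : q + r ≠ 0 := by
  intro h0
  exact h (by rw [show q = -r by linarith, padicValRat.neg])

private lemma v2_add_eq {q r : ℚ} (hq : q ≠ 0) (hr : r ≠ 0)
    (h : padicValRat 2 q < padicValRat 2 r) :
    padicValRat 2 (q + r) = padicValRat 2 q :=
  padicValRat.add_eq_of_lt (add_ne_zero_of_v2_ne hq h.ne) hq hr h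

private lemma nonsingular_of (x y : ℚ) (hy : y ≠ 0)
    (heq : y ^ 2 = x ^ 3 + 17558832 * x ^ 2 + 61973480694272 * x) :
    specializedCurveW6.Nonsingular x y := by
  rw [WeierstrassCurve.Affine.nonsingular_iff, WeierstrassCurve.Affine.equation_iff]
  constructor
  · simp only [specializedCurveW6]
    linear_combination heq
  · right
    simp only [specializedCurveW6]
    intro h0
    apply hy
    linarith

/-- The key doubling step: if `(x, y)` has 2-adic valuations `(-2m, -3m)` with `m ≥ 1`,
then the double has valuations `(-2(m+1), -3(m+1))`. -/
private lemma val_double {x y : ℚ} (h : specializedCurveW6.Nonsingular x y) (m : ℕ)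
    (hm : 1 ≤ m)
    (hx : padicValRat 2 x = -(2 * (m:ℤ))) (hy : padicValRat 2 y = -(3 * (m:ℤ))) :
    ∃ (x' y' : ℚ) (h' : specializedCurveW6.Nonsingular x' y'),
      some _ _ h + some _ _ h = some _ _ h' ∧
      padicValRat 2 x' = -(2 * ((m:ℤ)+1)) ∧ padicValRat 2 y' = -(3 * ((m:ℤ)+1)) := by
  have hm' : (1:ℤ) ≤ (m:ℤ) := by exact_mod_cast hm
  have hy0 : y ≠ 0 := by intro h0; rw [h0, padicValRat.zero] at hy; omega
  have hx0 : x ≠ 0 := by intro h0; rw [h0, padicValRat.zero] at hx; omega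
  have hneg : specializedCurveW6.negY x y = -y := by
    simp [WeierstrassCurve.Affine.negY, specializedCurveW6]
  have hyn : y ≠ specializedCurveW6.negY x y := by
    rw [hneg]; intro h0; apply hy0; linarith
  set ℓ := specializedCurveW6.slope x x y y with hℓdef
  have hslope : ℓ = (3 * x ^ 2 + (35117664 * x + 61973480694272)) / (2 * y) := by
    rw [hℓdef, slope_of_Y_ne rfl hyn, hneg]
    simp only [specializedCurveW6]
    congr 1 <;> ring
  -- valuations of the pieces of the slope numerator
  have hvx2 : padicValRat 2 (3 * x ^ 2) = -(4*(m:ℤ)) := by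
    rw [padicValRat.mul (by norm_num) (pow_ne_zero _ hx0), padicValRat.pow,
      show ((3:ℚ)) = ((3:ℤ):ℚ) * 2 ^ 0 by norm_num, v2_aux 3 0 (by norm_num), hx]
    push_cast; ring
  have hv35 : padicValRat 2 (35117664 * x) = 5 - 2*(m:ℤ) := by
    rw [padicValRat.mul (by norm_num) hx0,
      show (35117664:ℚ) = ((1097427:ℤ):ℚ) * 2 ^ 5 by norm_num,
      v2_aux _ _ (by norm_num), hx]
    push_cast; ring
  have hvc : padicValRat 2 (61973480694272:ℚ) = 9 := by
    rw [show (61973480694272:ℚ) = ((121041954481:ℤ):ℚ) * 2 ^ 9 by norm_num,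
      v2_aux _ _ (by norm_num)]
    norm_num
  have hS0 : (35117664:ℚ) * x ≠ 0 := mul_ne_zero (by norm_num) hx0
  have hvS : padicValRat 2 (35117664 * x + 61973480694272) = 5 - 2*(m:ℤ) := by
    rw [v2_add_eq hS0 (by norm_num) (by rw [hv35, hvc]; omega)]
    exact hv35
  have hSne : (35117664:ℚ) * x + 61973480694272 ≠ 0 :=
    add_ne_zero_of_v2_ne hS0 (by rw [hv35, hvc]; omega)
  have hx2ne : (3:ℚ) * x ^ 2 ≠ 0 := mul_ne_zero (by norm_num) (pow_ne_zero _ hx0)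
  have hN : padicValRat 2 (3*x^2 + (35117664 * x + 61973480694272)) = -(4*(m:ℤ)) := by
    rw [v2_add_eq hx2ne hSne (by rw [hvx2, hvS]; omega)]
    exact hvx2
  have hNne : (3:ℚ)*x^2 + (35117664 * x + 61973480694272) ≠ 0 :=
    add_ne_zero_of_v2_ne hx2ne (by rw [hvx2, hvS]; omega)
  have h2y : padicValRat 2 (2*y) = 1 - 3*(m:ℤ) := by
    rw [padicValRat.mul two_ne_zero hy0, v2_two, hy]; ring
  have hvℓ : padicValRat 2 ℓ = -((m:ℤ)+1) := by
    rw [hslope, padicValRat.div hNne (mul_ne_zero two_ne_zero hy0), hN, h2y]; ring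
  have hℓ0 : ℓ ≠ 0 := by intro h0; rw [h0, padicValRat.zero] at hvℓ; omega
  -- x-coordinate of the double
  have hxadd : specializedCurveW6.addX x x ℓ = ℓ^2 + (-(17558832:ℚ) + -(2*x)) := by
    simp only [WeierstrassCurve.Affine.addX, specializedCurveW6]
    ring
  have hvℓ2 : padicValRat 2 (ℓ^2) = -(2*((m:ℤ)+1)) := by
    rw [padicValRat.pow, hvℓ]; ring
  have hvm2x : padicValRat 2 (-(2*x)) = 1 - 2*(m:ℤ) := by
    rw [padicValRat.neg, padicValRat.mul two_ne_zero hx0, v2_two, hx]; ring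
  have hva2 : padicValRat 2 (-(17558832:ℚ)) = 4 := by
    rw [padicValRat.neg, show (17558832:ℚ) = ((1097427:ℤ):ℚ) * 2 ^ 4 by norm_num,
      v2_aux _ _ (by norm_num)]
    norm_num
  have hm2x0 : -((2:ℚ)*x) ≠ 0 := neg_ne_zero.2 (mul_ne_zero two_ne_zero hx0)
  have hT : padicValRat 2 (-(17558832:ℚ) + -(2*x)) = 1 - 2*(m:ℤ) := by
    rw [add_comm, v2_add_eq hm2x0 (by norm_num) (by rw [hvm2x, hva2]; omega)]
    exact hvm2x
  have hTne : -(17558832:ℚ) + -(2*x) ≠ 0 := by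
    rw [add_comm]
    exact add_ne_zero_of_v2_ne hm2x0 (by rw [hvm2x, hva2]; omega)
  have hvx' : padicValRat 2 (specializedCurveW6.addX x x ℓ) = -(2*((m:ℤ)+1)) := by
    rw [hxadd, v2_add_eq (pow_ne_zero _ hℓ0) hTne (by rw [hvℓ2, hT]; omega)]
    exact hvℓ2
  have hx'0 : specializedCurveW6.addX x x ℓ ≠ 0 := by
    intro h0; rw [h0, padicValRat.zero] at hvx'; omega
  have hvxsub : padicValRat 2 (specializedCurveW6.addX x x ℓ + -x) = -(2*((m:ℤ)+1)) := by
    rw [v2_add_eq hx'0 (neg_ne_zero.2 hx0) (by rw [hvx', padicValRat.neg, hx]; omega)]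
    exact hvx'
  have hsubne : specializedCurveW6.addX x x ℓ + -x ≠ 0 :=
    add_ne_zero_of_v2_ne hx'0 (by rw [hvx', padicValRat.neg, hx]; omega)
  -- y-coordinate of the double
  have hyadd : specializedCurveW6.addY x x y ℓ
      = -(ℓ * (specializedCurveW6.addX x x ℓ + -x)) + -y := by
    simp only [WeierstrassCurve.Affine.addY, WeierstrassCurve.Affine.negAddY,
      WeierstrassCurve.Affine.negY, specializedCurveW6]
    ring
  have hvy' : padicValRat 2 (specializedCurveW6.addY x x y ℓ) = -(3*((m:ℤ)+1)) := by
    rw [hyadd, v2_add_eq (neg_ne_zero.2 (mul_ne_zero hℓ0 hsubne)) (neg_ne_zero.2 hy0)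
      (by rw [padicValRat.neg, padicValRat.mul hℓ0 hsubne, hvℓ, hvxsub,
        padicValRat.neg, hy]; omega),
      padicValRat.neg, padicValRat.mul hℓ0 hsubne, hvℓ, hvxsub]
    ring
  exact ⟨_, _, nonsingular_add h h (fun hxy => hyn hxy.right), add_self_of_Y_ne hyn, hvx', hvy'⟩

private lemma val_iter {x y : ℚ} (h : specializedCurveW6.Nonsingular x y) (m : ℕ)
    (hm : 1 ≤ m)
    (hx : padicValRat 2 x = -(2 * (m:ℤ))) (hy : padicValRat 2 y = -(3 * (m:ℤ))) :
    ∀ k : ℕ, ∃ (x' y' : ℚ) (h' : specializedCurveW6.Nonsingular x' y'),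
      (2^k) • (some _ _ h : specializedCurveW6.Point) = some _ _ h' ∧
      padicValRat 2 x' = -(2 * ((m:ℤ)+k)) ∧ padicValRat 2 y' = -(3 * ((m:ℤ)+k)) := by
  intro k
  induction k with
  | zero => exact ⟨x, y, h, by simp, by rw [hx]; push_cast; ring, by rw [hy]; push_cast; ring⟩
  | succ k ih =>
    obtain ⟨x', y', h', hP, hx', hy'⟩ := ih
    obtain ⟨x'', y'', h'', hadd, hx'', hy''⟩ :=
      val_double h' (m + k) (by omega) (by rw [hx']; push_cast; ring)
        (by rw [hy']; push_cast; ring)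
    refine ⟨x'', y'', h'', ?_, by rw [hx'']; push_cast; ring, by rw [hy'']; push_cast; ring⟩
    rw [show (2:ℕ)^(k+1) = 2^k + 2^k by ring, add_nsmul, hP, hadd]

private lemma not_fin {x y : ℚ} (h : specializedCurveW6.Nonsingular x y) (m : ℕ)
    (hm : 1 ≤ m)
    (hx : padicValRat 2 x = -(2 * (m:ℤ))) (hy : padicValRat 2 y = -(3 * (m:ℤ))) :
    ¬ IsOfFinAddOrder (some _ _ h : specializedCurveW6.Point) := by
  intro hfin
  refine Set.infinite_of_injective_forall_mem
    (f := fun k : ℕ => (2^k) • (some _ _ h : specializedCurveW6.Point))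
    (s := (AddSubmonoid.multiples (some _ _ h : specializedCurveW6.Point) : Set _)) ?_ ?_
    hfin.finite_multiples
  · intro k l hkl
    obtain ⟨xk, yk, hk, hPk, hxk, _⟩ := val_iter h m hm hx hy k
    obtain ⟨xl, yl, hl, hPl, hxl, _⟩ := val_iter h m hm hx hy l
    simp only at hkl
    rw [hPk, hPl] at hkl
    have hxe : xk = xl := by
      cases hkl
      rfl
    rw [hxe, hxl] at hxk
    omega
  · intro k
    exact ⟨2^k, rfl⟩

/-- `G₁ = (2880000, 18655065600)` and `G₂ = (37002889/36, 1971840224123/216)` are rational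
points of infinite order on `y² = x³ + 17558832x² + 61973480694272x`. -/
theorem G1_G2_on_specializedCurveW6_infinite_order :
    (∃ h : specializedCurveW6.Nonsingular 2880000 18655065600,
      ¬ IsOfFinAddOrder (WeierstrassCurve.Affine.Point.some _ _ h)) ∧
    (∃ h : specializedCurveW6.Nonsingular (37002889 / 36) (1971840224123 / 216),
      ¬ IsOfFinAddOrder (WeierstrassCurve.Affine.Point.some _ _ h)) := by
  constructor
  · have h₁ : specializedCurveW6.Nonsingular 2880000 18655065600 :=
      nonsingular_of _ _ (by norm_num) (by norm_num)
    refine ⟨h₁, fun hfin => ?_⟩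
    have hneg : specializedCurveW6.negY 2880000 18655065600 = -18655065600 := by
      simp [WeierstrassCurve.Affine.negY, specializedCurveW6]
    have hyn : (18655065600:ℚ) ≠ specializedCurveW6.negY 2880000 18655065600 := by
      rw [hneg]; norm_num
    have hslope : specializedCurveW6.slope 2880000 2880000 18655065600 18655065600
        = 755809 / 150 := by
      rw [slope_of_Y_ne rfl hyn, hneg]
      simp only [specializedCurveW6]
      norm_num
    have hX : specializedCurveW6.addX 2880000 2880000
        (specializedCurveW6.slope 2880000 2880000 18655065600 18655065600)
        = 46573524481/22500 := by
      rw [hslope]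
      simp only [WeierstrassCurve.Affine.addX, specializedCurveW6]
      norm_num
    have hY : specializedCurveW6.addY 2880000 2880000 18655065600
        (specializedCurveW6.slope 2880000 2880000 18655065600 18655065600)
        = -49185112164460129/3375000 := by
      rw [hslope] at hX ⊢
      simp only [WeierstrassCurve.Affine.addY, WeierstrassCurve.Affine.negAddY,
        WeierstrassCurve.Affine.negY, specializedCurveW6] at hX ⊢
      rw [hX]
      norm_num
    have hfin2 : IsOfFinAddOrder (some _ _ h₁ + some _ _ h₁) := hfin.add hfin
    rw [add_self_of_Y_ne hyn] at hfin2
    refine not_fin _ 1 le_rfl ?_ ?_ hfin2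
    · rw [hX, show (46573524481/22500 : ℚ) = ((46573524481:ℤ):ℚ) * 2^0 / (((5625:ℤ):ℚ) * 2^2)
        by norm_num, v2_div _ _ _ _ (by norm_num) (by norm_num)]
      norm_num
    · rw [hY, show (-49185112164460129/3375000 : ℚ)
          = -(((49185112164460129:ℤ):ℚ) * 2^0 / (((421875:ℤ):ℚ) * 2^3)) by norm_num,
        padicValRat.neg, v2_div _ _ _ _ (by norm_num) (by norm_num)]
      norm_num
  · have h₂ : specializedCurveW6.Nonsingular (37002889 / 36) (1971840224123 / 216) :=
      nonsingular_of _ _ (by norm_num) (by norm_num)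
    refine ⟨h₂, not_fin _ 1 le_rfl ?_ ?_⟩
    · rw [show (37002889/36 : ℚ) = ((37002889:ℤ):ℚ) * 2^0 / (((9:ℤ):ℚ) * 2^2) by norm_num,
        v2_div _ _ _ _ (by norm_num) (by norm_num)]
      norm_num
    · rw [show (1971840224123/216 : ℚ) = ((1971840224123:ℤ):ℚ) * 2^0 / (((27:ℤ):ℚ) * 2^3)
          by norm_num,
        v2_div _ _ _ _ (by norm_num) (by norm_num)]
      norm_num
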